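/- Let G be as above, k ∈ Γ, and let g = Σ_{V∈K} a_V 1_V be a nonzero element of A_k, where K is a finite set of mutually disjoint k-graded compact open bisections. Then g* * g = Σ_{V,W∈K} conj(a_V) a_W 1_{V⁻¹W} is a nonzero element of A_e, where e is the identity of Γ. -/

import Mathlib

open scoped BigOperators

structure EtaleGroupoid (G : Type*) [TopologicalSpace G] where
  r : G → G
  s : G → G
  mul : G → G → G
  inv : G → G
  mul_assoc' : ∀ a b c, s a = r b → s b = r c → mul (mul a b) c = mul a (mul b c)
  r_mul : ∀ a b, s a = r b → r (mul a b) = r a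
  s_mul : ∀ a b, s a = r b → s (mul a b) = s b
  unit_mul : ∀ a, mul (r a) a = a
  mul_unit : ∀ a, mul a (s a) = a
  inv_inv : ∀ a, inv (inv a) = a
  r_inv : ∀ a, r (inv a) = s a
  s_inv : ∀ a, s (inv a) = r a
  mul_inv : ∀ a, mul a (inv a) = r a
  inv_mul : ∀ a, mul (inv a) a = s a
  continuous_r : Continuous r
  continuous_s : Continuous s
  continuous_inv : Continuous inv
  continuous_mul : ContinuousOn (fun p : G × G => mul p.1 p.2) {p : G × G | s p.1 = r p.2}

namespace EtaleGroupoid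

variable {G : Type*} [TopologicalSpace G] (g : EtaleGroupoid G)

/-- The unit space `G⁰`. -/
def unitSpace : Set G := Set.range g.r

/-- A bisection: a subset on which both `r` and `s` are injective. -/
def IsBisection (U : Set G) : Prop := Set.InjOn g.r U ∧ Set.InjOn g.s U

/-- The set-product `UV` of two subsets of `G`. -/
def setMul (U V : Set G) : Set G :=
  {x | ∃ a ∈ U, ∃ b ∈ V, g.s a = g.r b ∧ x = g.mul a b}

/-- The source map is a local homeomorphism (onto its open image). -/
def SourceEtale : Prop :=
  ∀ a : G, ∃ U : Set G, IsOpen U ∧ a ∈ U ∧ Set.InjOn g.s U ∧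
    ∀ V : Set G, V ⊆ U → IsOpen V → IsOpen (g.s '' V)

/-- The unit space is totally disconnected: it has a basis of compact open sets. -/
def UnitBasis : Prop :=
  ∀ u ∈ g.unitSpace, ∀ V : Set G, IsOpen V → u ∈ V →
    ∃ W : Set G, IsCompact W ∧ IsOpen W ∧ u ∈ W ∧ W ⊆ V ∧ W ⊆ g.unitSpace

/-- Convolution of complex functions on `G`. -/
noncomputable def conv (f h : G → ℂ) : G → ℂ :=
  fun γ => ∑ᶠ α ∈ {α : G | g.r α = g.r γ}, f α * h (g.mul (g.inv α) γ)

/-- The involution `f*(γ) = conj (f (γ⁻¹))`. -/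
noncomputable def star' (f : G → ℂ) : G → ℂ := fun γ => (starRingEnd ℂ) (f (g.inv γ))

/-- Indicator function of a set. -/
noncomputable def ind (U : Set G) : G → ℂ := Set.indicator U 1

/-- `c : G → Γ` is a cocycle. -/
def IsCocycle {Γ : Type*} [Group Γ] (c : G → Γ) : Prop :=
  ∀ a b, g.s a = g.r b → c (g.mul a b) = c a * c b

/-- The `n`-graded compact open bisections. -/
def BcoGr {Γ : Type*} (c : G → Γ) (n : Γ) : Set (Set G) :=
  {U | IsCompact U ∧ IsOpen U ∧ g.IsBisection U ∧ ∀ x ∈ U, c x = n}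

/-- All graded compact open bisections. -/
def Bco {Γ : Type*} (c : G → Γ) : Set (Set G) := ⋃ n, g.BcoGr c n

/-- `A(G)`: the locally constant, compactly supported complex functions, as a
submodule of `G → ℂ`. -/
noncomputable def AG : Submodule ℂ (G → ℂ) where
  carrier := {f | IsLocallyConstant f ∧ HasCompactSupport f}
  add_mem' := by
    rintro f h ⟨hf1, hf2⟩ ⟨hh1, hh2⟩
    exact ⟨hf1.comp₂ hh1 (· + ·), hf2.add hh2⟩
  zero_mem' := ⟨IsLocallyConstant.const 0, by
    simp [HasCompactSupport, tsupport]⟩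
  smul_mem' := by
    rintro a f ⟨hf1, hf2⟩
    constructor
    · have h := hf1.comp (fun z : ℂ => a * z)
      have : a • f = (fun z : ℂ => a * z) ∘ f := by
        funext x; simp [Function.comp, smul_eq_mul]
      rwa [this]
    · exact hf2.mono fun x hx => by
        have h : a * f x ≠ 0 := hx
        exact fun h0 => h (by simp [h0])

/-- The I-norm on `C_c(G)`. -/
noncomputable def Inorm (f : G → ℂ) : ℝ :=
  max (⨆ u ∈ g.unitSpace, ∑ᶠ α ∈ {α : G | g.r α = u}, ‖f α‖)
      (⨆ u ∈ g.unitSpace, ∑ᶠ α ∈ {α : G | g.s α = u}, ‖f α‖)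

/-- A representation of the graded compact open bisections in a complex algebra. -/
structure IsRep {Γ : Type*} {B : Type*} [Ring B] [Algebra ℂ B]
    (c : G → Γ) (t : Set G → B) : Prop where
  map_empty : t ∅ = 0
  map_mul : ∀ U V, U ∈ g.Bco c → V ∈ g.Bco c → t U * t V = t (g.setMul U V)
  map_union : ∀ n U V, U ∈ g.BcoGr c n → V ∈ g.BcoGr c n → Disjoint U V →
    g.IsBisection (U ∪ V) → t U + t V = t (U ∪ V)

end EtaleGroupoid



namespace EtaleGroupoid

variable {G : Type*} [TopologicalSpace G] (g : EtaleGroupoid G)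

lemma aux_r_r (a : G) : g.r (g.r a) = g.r a := by
  have h := g.r_mul a (g.inv a) (g.r_inv a).symm
  rwa [g.mul_inv] at h

lemma aux_s_r (a : G) : g.s (g.r a) = g.r a := by
  have h := g.s_mul a (g.inv a) (g.r_inv a).symm
  rwa [g.mul_inv, g.s_inv] at h

lemma aux_r_s (a : G) : g.r (g.s a) = g.s a := by
  rw [← g.r_inv, aux_r_r, g.r_inv]

lemma aux_cancel {α γ : G} (h : g.r α = g.r γ) :
    g.mul α (g.mul (g.inv α) γ) = γ := by
  rw [← g.mul_assoc' α (g.inv α) γ (g.r_inv α).symm (by rw [g.s_inv, h]), g.mul_inv, h,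
    g.unit_mul]

lemma aux_r_term {α γ : G} (h : g.r α = g.r γ) :
    g.r (g.mul (g.inv α) γ) = g.s α := by
  rw [g.r_mul _ _ (by rw [g.s_inv, h]), g.r_inv]

lemma ind_of_mem {U : Set G} {x : G} (h : x ∈ U) : ind U x = 1 := by
  simp [ind, h]

lemma ind_of_not_mem {U : Set G} {x : G} (h : x ∉ U) : ind U x = 0 := by
  simp [ind, h]

lemma conj_ind (U : Set G) (x : G) : (starRingEnd ℂ) (ind U x) = ind U x := by
  by_cases h : x ∈ U <;> simp [ind, h]

lemma mem_of_ind_ne_zero {U : Set G} {x : G} (h : ind U x ≠ 0) : x ∈ U := by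
  by_contra hx; exact h (ind_of_not_mem hx)

/-- for fixed `γ`, at most one `α` with `r α = r γ` contributes to the `(V, W)` term. -/
lemma term_support_subsingleton (γ : G) {V W : Set G} (hV : Set.InjOn g.s V) :
    (Function.support (Set.indicator {α : G | g.r α = g.r γ}
      (fun α => ind V (g.inv α) * ind W (g.mul (g.inv α) γ)))).Subsingleton := by
  intro x hx y hy
  rw [Function.mem_support] at hx hy
  obtain ⟨hxS, hxt⟩ := Set.indicator_apply_ne_zero.mp hx
  obtain ⟨hyS, hyt⟩ := Set.indicator_apply_ne_zero.mp hy
  have hxV : g.inv x ∈ V := mem_of_ind_ne_zero (left_ne_zero_of_mul hxt)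
  have hyV : g.inv y ∈ V := mem_of_ind_ne_zero (left_ne_zero_of_mul hyt)
  have hxS' : g.r x = g.r γ := hxS
  have hyS' : g.r y = g.r γ := hyS
  have h : g.inv x = g.inv y := hV hxV hyV (by rw [g.s_inv, g.s_inv, hxS', hyS'])
  rw [← g.inv_inv x, h, g.inv_inv]

/-- Key computation: the fibrewise sum of the `(V, W)` indicator term is the indicator
of `V⁻¹ W`. -/
lemma finsum_term (γ : G) {V W : Set G} (hV : Set.InjOn g.s V) :
    (∑ᶠ α ∈ {α : G | g.r α = g.r γ},
        (ind V (g.inv α) * ind W (g.mul (g.inv α) γ)))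
      = ind (g.setMul (g.inv '' V) W) γ := by
  classical
  rw [finsum_mem_def]
  by_cases h : γ ∈ g.setMul (g.inv '' V) W
  · obtain ⟨x, ⟨v, hv, rfl⟩, w, hw, hsr, rfl⟩ := h
    have hrw : g.r v = g.r w := by rw [← g.s_inv]; exact hsr
    have hrγ : g.r (g.mul (g.inv v) w) = g.s v := by rw [g.r_mul _ _ hsr, g.r_inv]
    have hmem : g.inv v ∈ {α : G | g.r α = g.r (g.mul (g.inv v) w)} := by
      simp only [Set.mem_setOf_eq, hrγ, g.r_inv]
    have hval : g.mul v (g.mul (g.inv v) w) = w := by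
      rw [← g.mul_assoc' v (g.inv v) w (g.r_inv v).symm hsr, g.mul_inv, hrw, g.unit_mul]
    rw [finsum_eq_single _ (g.inv v) ?_]
    · rw [Set.indicator_of_mem hmem, g.inv_inv, hval, ind_of_mem hv, ind_of_mem hw,
        ind_of_mem (show g.mul (g.inv v) w ∈ g.setMul (g.inv '' V) W from
          ⟨g.inv v, ⟨v, hv, rfl⟩, w, hw, hsr, rfl⟩), one_mul]
    · intro x hx
      by_contra hne
      obtain ⟨hxS, hxt⟩ := Set.indicator_apply_ne_zero.mp hne
      have hxV : g.inv x ∈ V := mem_of_ind_ne_zero (left_ne_zero_of_mul hxt)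
      have hxS' : g.r x = g.r (g.mul (g.inv v) w) := hxS
      have : g.inv x = v := hV hxV hv (by rw [g.s_inv, hxS', hrγ])
      exact hx (by rw [← this, g.inv_inv])
  · rw [ind_of_not_mem h]
    apply finsum_eq_zero_of_forall_eq_zero
    intro x
    by_contra hne
    obtain ⟨hxS, hxt⟩ := Set.indicator_apply_ne_zero.mp hne
    have hxS' : g.r x = g.r γ := hxS
    have hxV : g.inv x ∈ V := mem_of_ind_ne_zero (left_ne_zero_of_mul hxt)
    have hxW : g.mul (g.inv x) γ ∈ W := mem_of_ind_ne_zero (right_ne_zero_of_mul hxt)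
    exact h ⟨x, ⟨g.inv x, hxV, g.inv_inv x⟩, g.mul (g.inv x) γ, hxW,
      (g.aux_r_term hxS').symm, (g.aux_cancel hxS').symm⟩

end EtaleGroupoid


/-- If `f = Σ_(V ∈ K) a_V 1_V` is a nonzero `k`-graded element of `A(G)`, with `K`
a finite set of mutually disjoint `k`-graded compact open bisections, then
`f* * f = Σ_(V,W) conj(a_V) a_W 1_(V⁻¹W)` is a nonzero element of `A_e`. -/
theorem star_conv_nonzero {G : Type*} {Γ : Type*} [TopologicalSpace G] [T2Space G] [LocallyCompactSpace G]
    [Group Γ] [TopologicalSpace Γ] [DiscreteTopology Γ]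
    (g : EtaleGroupoid G) (hs : g.SourceEtale) (hu : g.UnitBasis)
    (c : G → Γ) (hc : Continuous c) (hcoc : g.IsCocycle c) (k : Γ)
    (K : Finset (Set G)) (a : Set G → ℂ)
    (hK : ∀ V ∈ K, V ∈ g.BcoGr c k)
    (hdisj : ∀ V ∈ K, ∀ W ∈ K, V ≠ W → Disjoint V W)
    (f : G → ℂ) (hf : f = ∑ V ∈ K, a V • EtaleGroupoid.ind V) (hne : f ≠ 0) :
    g.conv (g.star' f) f
      = ∑ V ∈ K, ∑ W ∈ K,
          ((starRingEnd ℂ) (a V) * a W) • EtaleGroupoid.ind (g.setMul (g.inv '' V) W) ∧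
    g.conv (g.star' f) f ≠ 0 ∧
    Function.support (g.conv (g.star' f) f) ⊆ c ⁻¹' {1} := by
  classical
  have hfx : ∀ x, f x = ∑ V ∈ K, a V * EtaleGroupoid.ind V x := by
    intro x; rw [hf]; simp [Finset.sum_apply]
  have hck : ∀ x, f x ≠ 0 → c x = k := by
    intro x hx
    rw [hfx] at hx
    obtain ⟨V, hVK, hV⟩ := Finset.exists_ne_zero_of_sum_ne_zero hx
    exact (hK V hVK).2.2.2 x (EtaleGroupoid.mem_of_ind_ne_zero (right_ne_zero_of_mul hV))
  have hcu : ∀ x : G, c (g.r x) = 1 := by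
    intro x
    have hmm : g.mul (g.r x) (g.r x) = g.r x := by
      have := g.unit_mul (g.r x); rwa [g.aux_r_r] at this
    have h4 := hcoc (g.r x) (g.r x) (by rw [g.aux_s_r, g.aux_r_r])
    rw [hmm] at h4
    exact (mul_left_cancel (show c (g.r x) * 1 = c (g.r x) * c (g.r x) by
      rw [mul_one, ← h4])).symm
  -- the main identity
  have heq : g.conv (g.star' f) f
      = ∑ V ∈ K, ∑ W ∈ K,
          ((starRingEnd ℂ) (a V) * a W) • EtaleGroupoid.ind (g.setMul (g.inv '' V) W) := by
    funext γ
    set S : Set G := {α : G | g.r α = g.r γ} with hSdef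
    set T : Set G × Set G → G → ℂ := fun p α =>
      EtaleGroupoid.ind p.1 (g.inv α) * EtaleGroupoid.ind p.2 (g.mul (g.inv α) γ) with hTdef
    set F : Set G × Set G → G → ℂ := fun p α =>
      ((starRingEnd ℂ) (a p.1) * a p.2) * T p α with hFdef
    have hTfin : ∀ p ∈ K ×ˢ K, (Function.support (Set.indicator S (T p))).Finite := by
      intro p hp
      exact (g.term_support_subsingleton γ
        (hK p.1 (Finset.mem_product.mp hp).1).2.2.1.2 (W := p.2)).finite
    have hFfin : ∀ p ∈ K ×ˢ K, (Function.support fun α => Set.indicator S (F p) α).Finite := by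
      intro p hp
      refine (hTfin p hp).subset ?_
      intro α hα
      rw [Function.mem_support] at hα ⊢
      obtain ⟨hαS, hαt⟩ := Set.indicator_apply_ne_zero.mp hα
      exact Set.indicator_apply_ne_zero.mpr ⟨hαS, right_ne_zero_of_mul hαt⟩
    have hint : ∀ α : G, g.star' f α * f (g.mul (g.inv α) γ) = ∑ p ∈ K ×ˢ K, F p α := by
      intro α
      rw [hFdef]
      simp only [EtaleGroupoid.star']
      rw [Finset.sum_product]
      rw [hfx (g.inv α), hfx (g.mul (g.inv α) γ), map_sum]
      simp only [map_mul, EtaleGroupoid.conj_ind]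
      rw [Finset.sum_mul_sum]
      exact Finset.sum_congr rfl fun V _ => Finset.sum_congr rfl fun W _ => by
        simp only [hTdef]; ring
    have hswap : ∀ α, Set.indicator S (fun α => ∑ p ∈ K ×ˢ K, F p α) α
        = ∑ p ∈ K ×ˢ K, Set.indicator S (F p) α := by
      intro α
      by_cases hα : α ∈ S <;>
        simp [Set.indicator_of_mem, Set.indicator_of_notMem, hα]
    calc g.conv (g.star' f) f γ
        = ∑ᶠ α ∈ S, g.star' f α * f (g.mul (g.inv α) γ) := rfl
      _ = ∑ᶠ α ∈ S, ∑ p ∈ K ×ˢ K, F p α := finsum_mem_congr rfl fun α _ => hint α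
      _ = ∑ᶠ α, ∑ p ∈ K ×ˢ K, Set.indicator S (F p) α := by
          rw [finsum_mem_def]; exact finsum_congr hswap
      _ = ∑ p ∈ K ×ˢ K, ∑ᶠ α, Set.indicator S (F p) α := finsum_sum_comm _ _ hFfin
      _ = ∑ p ∈ K ×ˢ K, ((starRingEnd ℂ) (a p.1) * a p.2) *
            EtaleGroupoid.ind (g.setMul (g.inv '' p.1) p.2) γ := by
          refine Finset.sum_congr rfl fun p hp => ?_
          have h1 : ∀ α, Set.indicator S (F p) α
              = ((starRingEnd ℂ) (a p.1) * a p.2) * Set.indicator S (T p) α := by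
            intro α
            by_cases hα : α ∈ S <;>
              simp [Set.indicator_of_mem, Set.indicator_of_notMem, hα, hFdef]
          rw [finsum_congr h1, ← mul_finsum _ _, ← finsum_mem_def,
            g.finsum_term γ (hK p.1 (Finset.mem_product.mp hp).1).2.2.1.2]
      _ = (∑ V ∈ K, ∑ W ∈ K,
            ((starRingEnd ℂ) (a V) * a W) • EtaleGroupoid.ind (g.setMul (g.inv '' V) W)) γ := by
          rw [Finset.sum_product]
          simp [Finset.sum_apply, smul_eq_mul]
  refine ⟨heq, ?_, ?_⟩
  · -- nonvanishing
    obtain ⟨γ₀, hγ₀⟩ := Function.ne_iff.mp hne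
    set u := g.s γ₀ with hu
    have hru : g.r u = u := g.aux_r_s γ₀
    set S : Set G := {α : G | g.r α = g.r u} with hSdef
    set t : G → ℂ := fun α => g.star' f α * f (g.mul (g.inv α) u) with htdef
    have hdiag : ∀ α ∈ S, t α = (Complex.normSq (f (g.inv α)) : ℂ) := by
      intro α hα
      have hα' : g.r α = u := by
        have : g.r α = g.r u := hα
        rw [this, hru]
      have hmu : g.mul (g.inv α) u = g.inv α := by
        conv_lhs => rw [show u = g.s (g.inv α) by rw [g.s_inv, hα'], g.mul_unit]
      rw [htdef]
      simp only [EtaleGroupoid.star', hmu]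
      rw [mul_comm, Complex.mul_conj]
    have hinvmem : g.inv γ₀ ∈ S := by
      show g.r (g.inv γ₀) = g.r u
      rw [g.r_inv, hru]
    have hsub : S ∩ Function.support t ⊆ g.inv '' (⋃ V ∈ K, {b ∈ (V : Set G) | g.s b = u}) := by
      rintro α ⟨hαS, hαt⟩
      have hf1 : f (g.inv α) ≠ 0 := by
        intro h
        apply hαt
        rw [hdiag α hαS, h]
        simp
      rw [hfx] at hf1
      obtain ⟨V, hVK, hV⟩ := Finset.exists_ne_zero_of_sum_ne_zero hf1
      have hmem : g.inv α ∈ V := EtaleGroupoid.mem_of_ind_ne_zero (right_ne_zero_of_mul hV)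
      have hαS' : g.r α = g.r u := hαS
      exact ⟨g.inv α, Set.mem_biUnion hVK ⟨hmem, by rw [g.s_inv, hαS', hru]⟩, g.inv_inv α⟩
    have hfin : (S ∩ Function.support t).Finite := by
      refine Set.Finite.subset (Set.Finite.image _ (Set.Finite.biUnion K.finite_toSet ?_)) hsub
      intro V hVK
      apply Set.Subsingleton.finite
      rintro x ⟨hx1, hx2⟩ y ⟨hy1, hy2⟩
      exact (hK V hVK).2.2.1.2 hx1 hy1 (hx2.trans hy2.symm)
    intro hz
    have hzu : (∑ᶠ α ∈ S, t α) = 0 := by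
      have : g.conv (g.star' f) f u = 0 := by rw [hz]; rfl
      exact this
    rw [finsum_mem_eq_sum t hfin] at hzu
    have hdgt : g.inv γ₀ ∈ hfin.toFinset := by
      rw [hfin.mem_toFinset]
      refine ⟨hinvmem, ?_⟩
      rw [Function.mem_support]
      have h1 : t (g.inv γ₀) = (Complex.normSq (f γ₀) : ℂ) := by
        have := hdiag (g.inv γ₀) hinvmem
        rwa [g.inv_inv] at this
      rw [h1]
      simpa [Complex.normSq_eq_zero] using hγ₀
    have hzr : (∑ α ∈ hfin.toFinset, Complex.normSq (f (g.inv α))) = 0 := by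
      have hc : (∑ α ∈ hfin.toFinset, t α)
          = ((∑ α ∈ hfin.toFinset, Complex.normSq (f (g.inv α)) : ℝ) : ℂ) := by
        push_cast
        exact Finset.sum_congr rfl fun α hα => hdiag α (hfin.mem_toFinset.mp hα).1
      rw [hc] at hzu
      exact_mod_cast hzu
    have hpos : 0 < ∑ α ∈ hfin.toFinset, Complex.normSq (f (g.inv α)) := by
      refine Finset.sum_pos' (fun α _ => Complex.normSq_nonneg _) ⟨g.inv γ₀, hdgt, ?_⟩
      rw [g.inv_inv]
      exact Complex.normSq_pos.mpr hγ₀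
    exact absurd hzr hpos.ne'
  · -- support is in the kernel of the cocycle
    intro γ hγ
    rw [Function.mem_support] at hγ
    have hex : ∃ α, α ∈ {α : G | g.r α = g.r γ} ∧
        g.star' f α * f (g.mul (g.inv α) γ) ≠ 0 := by
      by_contra hcon
      push_neg at hcon
      apply hγ
      show (∑ᶠ α ∈ {α : G | g.r α = g.r γ}, g.star' f α * f (g.mul (g.inv α) γ)) = 0
      rw [finsum_mem_def]
      apply finsum_eq_zero_of_forall_eq_zero
      intro x
      by_cases hx : x ∈ {α : G | g.r α = g.r γ}
      · rw [Set.indicator_of_mem hx]; exact hcon x hx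
      · exact Set.indicator_of_notMem hx _
    obtain ⟨α, hαS, hαt⟩ := hex
    have hαS' : g.r α = g.r γ := hαS
    have h1 : f (g.inv α) ≠ 0 := by
      have := left_ne_zero_of_mul hαt
      simp only [EtaleGroupoid.star'] at this
      intro h
      rw [h] at this
      simp at this
    have h2 : f (g.mul (g.inv α) γ) ≠ 0 := right_ne_zero_of_mul hαt
    have hc1 : c (g.inv α) = k := hck _ h1
    have hc2 : c (g.mul (g.inv α) γ) = k := hck _ h2
    have hca : c α = k⁻¹ := by
      have h3 := hcoc α (g.inv α) (g.r_inv α).symm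
      rw [g.mul_inv, hcu, hc1] at h3
      exact eq_inv_of_mul_eq_one_left h3.symm
    have hsplit : c γ = c α * c (g.mul (g.inv α) γ) := by
      have := hcoc α (g.mul (g.inv α) γ) (g.aux_r_term hαS').symm
      rwa [g.aux_cancel hαS'] at this
    show c γ = 1
    rw [hsplit, hca, hc2, inv_mul_cancel]
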